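/- arXiv:1201.6480 — 3 statements merged into one kernel-verified Lean document; each statement's English description precedes it below -/
import Mathlib

section
/- The function h₄(x) = ((x - sin(x))·cos(x)) / (x - sin(x)·cos(x)) is strictly decreasing on (0, π). -/
open Real

private lemma nonneg_of_deriv' {f f' : ℝ → ℝ} (hd : ∀ t, HasDerivAt f (f' t) t) (h0 : f 0 = 0)
    (hf' : ∀ t, 0 ≤ t → 0 ≤ f' t) : ∀ y, 0 ≤ y → 0 ≤ f y := by
  intro y hy
  have mono : MonotoneOn f (Set.Ici 0) := by
    apply monotoneOn_of_deriv_nonneg (convex_Ici 0)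
      (fun t _ => (hd t).continuousAt.continuousWithinAt)
    · exact fun t _ => (hd t).differentiableAt.differentiableWithinAt
    · intro t ht
      rw [(hd t).deriv]
      exact hf' t (le_of_lt (by simpa [interior_Ici] using ht))
  have := mono Set.self_mem_Ici (Set.mem_Ici.2 hy) hy
  linarith [h0 ▸ this]

private lemma sin_lb₁ {y : ℝ} (hy : 0 ≤ y) : y - y^3/6 ≤ Real.sin y := by
  have := nonneg_of_deriv' (f := fun t => Real.sin t - (t - t^3/6))
    (f' := fun t => Real.cos t - (1 - t^2/2))
    (fun t => by
      have h := (Real.hasDerivAt_sin t).sub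
        ((hasDerivAt_id t).sub ((hasDerivAt_pow 3 t).div_const 6))
      refine h.congr_deriv ?_
      all_goals (try funext u); (try simp only [id_eq]); push_cast; ring)
    (by norm_num)
    (fun t _ => by linarith [Real.one_sub_sq_div_two_le_cos (x := t)]) y hy
  linarith

private lemma cos_ub₁ {y : ℝ} (hy : 0 ≤ y) : Real.cos y ≤ 1 - y^2/2 + y^4/24 := by
  have := nonneg_of_deriv' (f := fun t => (1 - t^2/2 + t^4/24) - Real.cos t)
    (f' := fun t => (t^3/6 - t) + Real.sin t)
    (fun t => by
      have h := ((((hasDerivAt_pow 2 t).div_const 2).const_sub 1).add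
        ((hasDerivAt_pow 4 t).div_const 24)).sub (Real.hasDerivAt_cos t)
      refine h.congr_deriv ?_
      all_goals (try funext u); (try simp only [id_eq]); push_cast; ring)
    (by norm_num)
    (fun t ht => by linarith [sin_lb₁ ht]) y hy
  linarith

private lemma sin_ub₁ {y : ℝ} (hy : 0 ≤ y) : Real.sin y ≤ y - y^3/6 + y^5/120 := by
  have := nonneg_of_deriv' (f := fun t => (t - t^3/6 + t^5/120) - Real.sin t)
    (f' := fun t => (1 - t^2/2 + t^4/24) - Real.cos t)
    (fun t => by
      have h := (((hasDerivAt_id t).sub ((hasDerivAt_pow 3 t).div_const 6)).add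
        ((hasDerivAt_pow 5 t).div_const 120)).sub (Real.hasDerivAt_sin t)
      refine h.congr_deriv ?_
      all_goals (try funext u); (try simp only [id_eq]); push_cast; ring)
    (by norm_num)
    (fun t ht => by linarith [cos_ub₁ ht]) y hy
  linarith

private lemma cos_lb₁ {y : ℝ} (hy : 0 ≤ y) : 1 - y^2/2 + y^4/24 - y^6/720 ≤ Real.cos y := by
  have := nonneg_of_deriv' (f := fun t => Real.cos t - (1 - t^2/2 + t^4/24 - t^6/720))
    (f' := fun t => (t - t^3/6 + t^5/120) - Real.sin t)
    (fun t => by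
      have h := (Real.hasDerivAt_cos t).sub
        ((((hasDerivAt_pow 2 t).div_const 2).const_sub 1).add
          (((hasDerivAt_pow 4 t).div_const 24).sub ((hasDerivAt_pow 6 t).div_const 720)))
      refine (h.congr_deriv ?_).congr_of_eventuallyEq (Filter.Eventually.of_forall fun u => ?_)
      all_goals (try funext u); (try simp only [id_eq, Pi.sub_apply, Pi.add_apply]); push_cast; ring)
    (by norm_num)
    (fun t ht => by linarith [sin_ub₁ ht]) y hy
  linarith

private lemma sin_lb₂ {y : ℝ} (hy : 0 ≤ y) :
    y - y^3/6 + y^5/120 - y^7/5040 ≤ Real.sin y := by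
  have := nonneg_of_deriv' (f := fun t => Real.sin t - (t - t^3/6 + t^5/120 - t^7/5040))
    (f' := fun t => Real.cos t - (1 - t^2/2 + t^4/24 - t^6/720))
    (fun t => by
      have h := (Real.hasDerivAt_sin t).sub
        (((hasDerivAt_id t).sub ((hasDerivAt_pow 3 t).div_const 6)).add
          (((hasDerivAt_pow 5 t).div_const 120).sub ((hasDerivAt_pow 7 t).div_const 5040)))
      refine (h.congr_deriv ?_).congr_of_eventuallyEq (Filter.Eventually.of_forall fun u => ?_)
      all_goals (try funext u); (try simp only [id_eq, Pi.sub_apply, Pi.add_apply]); push_cast; ring)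
    (by norm_num)
    (fun t ht => by linarith [cos_lb₁ ht]) y hy
  linarith

private lemma qpos' {u : ℝ} (h0 : 0 ≤ u) (h1 : u ≤ 5/2) :
    0 < 7/90 - 89/1890*u + 73/7200*u^2 - 11/12096*u^3 + 1/25920*u^4 - 1/1360800*u^5 := by
  nlinarith [sq_nonneg u, sq_nonneg (u-1), sq_nonneg (u-2),
    mul_nonneg h0 (sub_nonneg.2 h1), sq_nonneg (u*(5/2-u)),
    mul_nonneg (mul_nonneg h0 h0) (sub_nonneg.2 h1),
    mul_nonneg (mul_nonneg (mul_nonneg h0 h0) h0) (sub_nonneg.2 h1), sq_nonneg (u^2 - u)]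

set_option maxHeartbeats 1000000 in
private lemma key_ineq {x : ℝ} (h0 : 0 < x) (h2 : x < π/2) :
    (1 - Real.cos x) * Real.cos x * (x - Real.sin x * Real.cos x) <
      (x - Real.sin x) * Real.sin x * (x + Real.sin x * Real.cos x) := by
  set s := Real.sin x with hs
  set c := Real.cos x with hc
  have h158 : x ≤ 158/100 := by nlinarith [Real.pi_lt_d2]
  have hxsq : x^2 ≤ 5/2 := by nlinarith [mul_le_mul h158 h158 h0.le (by norm_num : (0:ℝ) ≤ 158/100)]
  have hx0 : (0:ℝ) ≤ x := h0.le
  have hsc2 : s * c = Real.sin (2*x) / 2 := by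
    rw [hs, hc, Real.sin_two_mul]; ring
  have h2x : (0:ℝ) ≤ 2*x := by linarith
  -- bounds
  have b1 : 1 - c ≤ x^2/2 - x^4/24 + x^6/720 := by
    have := cos_lb₁ hx0; rw [← hc] at this; linarith
  have b3 : c ≤ 1 - x^2/2 + x^4/24 := by
    have := cos_ub₁ hx0; rw [← hc] at this; linarith
  have b2 : x - s*c ≤ 2*x^3/3 - 2*x^5/15 + 4*x^7/315 := by
    have := sin_lb₂ h2x
    rw [hsc2]; nlinarith [this]
  have b4 : x^3/6 - x^5/120 ≤ x - s := by
    have := sin_ub₁ hx0; rw [← hs] at this; linarith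
  have b5 : x - x^3/6 ≤ s := by
    have := sin_lb₁ hx0; rw [← hs] at this; linarith
  have b6 : 2*x - 2*x^3/3 ≤ x + s*c := by
    have := sin_lb₁ h2x
    rw [hsc2]; nlinarith [this]
  -- positivity
  have hcpos : 0 < c := Real.cos_pos_of_mem_Ioo ⟨by linarith, h2⟩
  have hspos : 0 < s := Real.sin_pos_of_pos_of_lt_pi h0 (by linarith [Real.pi_gt_three])
  have h1c : 0 ≤ 1 - c := by
    have := Real.cos_le_one x; rw [← hc] at this; linarith
  have hxslt : s < x := by rw [hs]; exact Real.sin_lt h0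
  have hxsc : 0 ≤ x - s*c := by
    have h := Real.sin_lt (x := 2*x) (by linarith)
    rw [hsc2]; linarith
  have hl4 : 0 ≤ x^3/6 - x^5/120 := by nlinarith
  have hl5 : 0 ≤ x - x^3/6 := by nlinarith
  have hl6 : 0 ≤ 2*x - 2*x^3/3 := by nlinarith
  have hu1 : 0 ≤ x^2/2 - x^4/24 + x^6/720 := le_trans h1c b1
  have hu3 : 0 ≤ 1 - x^2/2 + x^4/24 := le_trans hcpos.le b3
  -- chain
  have hL : (1 - c) * c * (x - s*c) ≤
      ((x^2/2 - x^4/24 + x^6/720) * (1 - x^2/2 + x^4/24)) *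
        (2*x^3/3 - 2*x^5/15 + 4*x^7/315) := by
    have h12 : (1 - c) * c ≤ (x^2/2 - x^4/24 + x^6/720) * (1 - x^2/2 + x^4/24) :=
      mul_le_mul b1 b3 hcpos.le hu1
    exact mul_le_mul h12 b2 hxsc (mul_nonneg hu1 hu3)
  have hR : ((x^3/6 - x^5/120) * (x - x^3/6)) * (2*x - 2*x^3/3) ≤
      (x - s) * s * (x + s*c) := by
    have h45 : (x^3/6 - x^5/120) * (x - x^3/6) ≤ (x - s) * s :=
      mul_le_mul b4 b5 hl5 (by linarith)
    exact mul_le_mul h45 b6 hl6 (mul_nonneg (by linarith) hspos.le)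
  have hmid : ((x^2/2 - x^4/24 + x^6/720) * (1 - x^2/2 + x^4/24)) *
        (2*x^3/3 - 2*x^5/15 + 4*x^7/315) <
      ((x^3/6 - x^5/120) * (x - x^3/6)) * (2*x - 2*x^3/3) := by
    have hq := qpos' (sq_nonneg x) hxsq
    have h7 : 0 < x^7 := pow_pos h0 7
    have := mul_pos h7 hq
    nlinarith [this]
  linarith

set_option maxHeartbeats 1000000 in
private lemma deriv_num_neg {x : ℝ} (hx : x ∈ Set.Ioo 0 Real.pi) :
    ((1 - Real.cos x) * Real.cos x + (x - Real.sin x) * (-Real.sin x)) *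
        (x - Real.sin x * Real.cos x) -
      (x - Real.sin x) * Real.cos x *
        (1 - (Real.cos x * Real.cos x + Real.sin x * (-Real.sin x))) < 0 := by
  obtain ⟨hx0, hxpi⟩ := hx
  set s := Real.sin x with hs
  set c := Real.cos x with hc
  have pyth : s^2 + c^2 = 1 := Real.sin_sq_add_cos_sq x
  have hxslt : s < x := by rw [hs]; exact Real.sin_lt hx0
  have hkey : (1 - c) * c * (x - s*c) < (x - s) * s * (x + s*c) := by
    rcases le_or_gt c 0 with hcle | hcgt
    · have hxge : π/2 ≤ x := by
        by_contra hlt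
        push_neg at hlt
        have := Real.cos_pos_of_mem_Ioo (x := x) ⟨by linarith, hlt⟩
        rw [← hc] at this; linarith
      have hspos : 0 < s := Real.sin_pos_of_pos_of_lt_pi hx0 hxpi
      have hsc : -1 ≤ s * c := by
        have h1 := Real.neg_one_le_cos x
        have h2 := Real.sin_le_one x
        rw [← hc] at h1; rw [← hs] at h2
        nlinarith
      have hx1 : 1 < x := by linarith [Real.pi_gt_three]
      have hxsc' : 0 ≤ x - s*c := by nlinarith
      have hL : (1 - c) * c * (x - s*c) ≤ 0 := by
        nlinarith [mul_nonneg (by linarith : (0:ℝ) ≤ 1 - c) hxsc']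
      have hR : 0 < (x - s) * s * (x + s*c) :=
        mul_pos (mul_pos (by linarith) hspos) (by linarith)
      linarith
    · have hxlt : x < π/2 := by
        by_contra hge
        push_neg at hge
        have := Real.cos_nonpos_of_pi_div_two_le_of_le hge (by linarith [Real.pi_pos])
        rw [← hc] at this; linarith
      exact key_ineq hx0 hxlt
  have hid : ((1 - c) * c + (x - s) * (-s)) * (x - s*c) - (x - s) * c * (1 - (c*c + s*(-s))) =
      (1 - c) * c * (x - s*c) - (x - s) * s * (x + s*c) := by
    linear_combination (x - s) * c * pyth
  linarith [hid ▸ (by linarith [hkey] :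
    (1 - c) * c * (x - s*c) - (x - s) * s * (x + s*c) < 0)]

private lemma denom_pos {x : ℝ} (hx : x ∈ Set.Ioo 0 Real.pi) :
    0 < x - Real.sin x * Real.cos x := by
  have h := Real.sin_lt (x := 2*x) (by linarith [hx.1])
  rw [Real.sin_two_mul] at h
  linarith

private lemma hasDerivAt_h4 {x : ℝ} (hx : x ∈ Set.Ioo 0 Real.pi) :
    HasDerivAt (fun x : ℝ => ((x - Real.sin x) * Real.cos x) / (x - Real.sin x * Real.cos x))
      ((((1 - Real.cos x) * Real.cos x + (x - Real.sin x) * (-Real.sin x)) *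
          (x - Real.sin x * Real.cos x) -
        (x - Real.sin x) * Real.cos x *
          (1 - (Real.cos x * Real.cos x + Real.sin x * (-Real.sin x)))) /
        (x - Real.sin x * Real.cos x)^2) x := by
  have hN : HasDerivAt (fun x : ℝ => (x - Real.sin x) * Real.cos x)
      ((1 - Real.cos x) * Real.cos x + (x - Real.sin x) * (-Real.sin x)) x := by
    have h := ((hasDerivAt_id x).sub (Real.hasDerivAt_sin x)).mul (Real.hasDerivAt_cos x)
    refine h.congr_deriv ?_
    all_goals (try funext u); (try simp only [id_eq, Pi.sub_apply])
  have hD : HasDerivAt (fun x : ℝ => x - Real.sin x * Real.cos x)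
      (1 - (Real.cos x * Real.cos x + Real.sin x * (-Real.sin x))) x := by
    have h := (hasDerivAt_id x).sub ((Real.hasDerivAt_sin x).mul (Real.hasDerivAt_cos x))
    refine h.congr_deriv ?_
    all_goals (try funext u); (try simp only [id_eq, Pi.sub_apply])
  exact hN.div hD (denom_pos hx).ne'

theorem h4_strictAntiOn :
    StrictAntiOn (fun x : ℝ => ((x - Real.sin x) * Real.cos x) / (x - Real.sin x * Real.cos x))
      (Set.Ioo 0 Real.pi) := by
  apply strictAntiOn_of_deriv_neg (convex_Ioo 0 Real.pi)
  · exact fun x hx => (hasDerivAt_h4 hx).continuousAt.continuousWithinAt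
  · intro x hx
    rw [interior_Ioo] at hx
    rw [(hasDerivAt_h4 hx).deriv]
    exact div_neg_of_neg_of_pos (deriv_num_neg hx) (pow_pos (denom_pos hx) 2)
end

section
/- For all a, b > 0 with a ≠ b, (1/π)·C(a,b) + (1 - 1/π)·H(a,b) < P(a,b) < (5/12)·C(a,b) + (7/12)·H(a,b), and the constants 1/π and 5/12 are best possible. -/
open Real

noncomputable def Amean (a b : ℝ) : ℝ := (a + b) / 2
noncomputable def Gmean (a b : ℝ) : ℝ := Real.sqrt (a * b)
noncomputable def Hmean (a b : ℝ) : ℝ := 2 * a * b / (a + b)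
noncomputable def Cmean (a b : ℝ) : ℝ := (a ^ 2 + b ^ 2) / (a + b)
noncomputable def Cbar (a b : ℝ) : ℝ := 2 * (a ^ 2 + a * b + b ^ 2) / (3 * (a + b))
noncomputable def Smean (a b : ℝ) : ℝ := Real.sqrt ((a ^ 2 + b ^ 2) / 2)
noncomputable def Pmean (a b : ℝ) : ℝ := (a - b) / (2 * Real.arcsin ((a - b) / (a + b)))
noncomputable def Tmean (a b : ℝ) : ℝ := (a - b) / (2 * Real.arctan ((a - b) / (a + b)))

lemma sin_ge_cubic {x : ℝ} (hx : 0 ≤ x) : x - x^3/6 ≤ sin x := by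
  have hmono : MonotoneOn (fun x : ℝ => sin x - x + x^3/6) (Set.Ici 0) := by
    apply monotoneOn_of_deriv_nonneg (convex_Ici 0)
    · fun_prop
    · intro y hy
      exact (DifferentiableAt.differentiableWithinAt (by fun_prop))
    · intro y hy
      have hd : HasDerivAt (fun x : ℝ => sin x - x + x^3/6) (cos y - 1 + 3*y^2/6) y := by
        have h1 := (Real.hasDerivAt_sin y).sub (hasDerivAt_id y)
        have h2 := (hasDerivAt_pow 3 y).div_const 6
        exact (h1.add h2).congr_deriv (by push_cast; ring)
      rw [hd.deriv]
      nlinarith [Real.one_sub_sq_div_two_le_cos (x := y), sq_nonneg y]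
  have := hmono (Set.mem_Ici.2 le_rfl) (Set.mem_Ici.2 hx) hx
  simp at this
  linarith

lemma cos_le_quartic {x : ℝ} (hx : 0 ≤ x) : cos x ≤ 1 - x^2/2 + x^4/24 := by
  have hmono : MonotoneOn (fun x : ℝ => 1 - x^2/2 + x^4/24 - cos x) (Set.Ici 0) := by
    apply monotoneOn_of_deriv_nonneg (convex_Ici 0)
    · fun_prop
    · intro y hy
      exact (DifferentiableAt.differentiableWithinAt (by fun_prop))
    · intro y hy
      have hd : HasDerivAt (fun x : ℝ => 1 - x^2/2 + x^4/24 - cos x)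
          (0 - 2*y/2 + 4*y^3/24 - (-sin y)) y := by
        have h1 := ((hasDerivAt_const y (1:ℝ)).sub ((hasDerivAt_pow 2 y).div_const 2)).add
          ((hasDerivAt_pow 4 y).div_const 24)
        have := h1.sub (Real.hasDerivAt_cos y)
        exact this.congr_deriv (by push_cast; ring)
      rw [hd.deriv]
      have hy0 : (0:ℝ) ≤ y := interior_subset hy |>.out
      have := sin_ge_cubic hy0
      nlinarith
  have := hmono (Set.mem_Ici.2 le_rfl) (Set.mem_Ici.2 hx) hx
  simp at this
  linarith

lemma sin_le_quintic {x : ℝ} (hx : 0 ≤ x) : sin x ≤ x - x^3/6 + x^5/120 := by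
  have hmono : MonotoneOn (fun x : ℝ => x - x^3/6 + x^5/120 - sin x) (Set.Ici 0) := by
    apply monotoneOn_of_deriv_nonneg (convex_Ici 0)
    · fun_prop
    · intro y hy
      exact (DifferentiableAt.differentiableWithinAt (by fun_prop))
    · intro y hy
      have hd : HasDerivAt (fun x : ℝ => x - x^3/6 + x^5/120 - sin x)
          (1 - 3*y^2/6 + 5*y^4/120 - cos y) y := by
        have h1 := ((hasDerivAt_id y).sub ((hasDerivAt_pow 3 y).div_const 6)).add
          ((hasDerivAt_pow 5 y).div_const 120)
        have := h1.sub (Real.hasDerivAt_sin y)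
        exact this.congr_deriv (by push_cast; ring)
      rw [hd.deriv]
      have hy0 : (0:ℝ) ≤ y := interior_subset hy |>.out
      have := cos_le_quartic hy0
      nlinarith
  have := hmono (Set.mem_Ici.2 le_rfl) (Set.mem_Ici.2 hx) hx
  simp at this
  linarith

-- g(θ) = 6θ - θ sin²θ - 6 sinθ > 0
lemma lemU {θ : ℝ} (h0 : 0 < θ) (h1 : θ < π/2) : 6*sin θ + θ*(sin θ)^2 < 6*θ := by
  have hle : θ ≤ 1.58 := by nlinarith [Real.pi_lt_d2]
  have hup := sin_le_quintic h0.le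
  have hlo := sin_ge_cubic h0.le
  have hs0 : 0 < sin θ := sin_pos_of_pos_of_lt_pi h0 (by nlinarith [Real.pi_gt_three])
  have hupnn : (0:ℝ) ≤ θ - θ^3/6 + θ^5/120 := le_trans hs0.le hup
  have hsq : (sin θ)^2 ≤ (θ - θ^3/6 + θ^5/120)^2 := by nlinarith
  have hu : θ^2 ≤ 2.5 := by nlinarith
  have hu0 : 0 < θ^2 := by positivity
  have hQ : 0 < 17/60 - 2*θ^2/45 + (θ^2)^2/360 - (θ^2)^3/14400 := by
    nlinarith [mul_nonneg (sub_nonneg.2 hu) hu0.le,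
      mul_nonneg (mul_nonneg (sub_nonneg.2 hu) hu0.le) hu0.le, sq_nonneg (θ^2 - 2.5)]
  have hKey : θ*(θ - θ^3/6 + θ^5/120)^2 < θ^3 - θ^5/20 := by
    nlinarith [mul_pos (pow_pos h0 5) hQ]
  have h3 : θ*(sin θ)^2 ≤ θ*(θ - θ^3/6 + θ^5/120)^2 :=
    mul_le_mul_of_nonneg_left hsq h0.le
  linarith

lemma key_upper {t : ℝ} (ht : 0 < t) (ht1 : t < 1) : t / arcsin t < 1 - t^2/6 := by
  have hθ : 0 < arcsin t := arcsin_pos.2 ht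
  have hθ2 : arcsin t < π/2 := (arcsin_lt_pi_div_two).2 ht1
  have hsin : sin (arcsin t) = t := sin_arcsin (by linarith) ht1.le
  have := lemU hθ hθ2
  rw [hsin] at this
  rw [div_lt_iff₀ hθ]
  nlinarith

lemma k_bounds : 0.3633 ≤ 1 - 2/π ∧ 1 - 2/π ≤ 0.3634 := by
  have h1 := Real.pi_gt_d6
  have h2 := Real.pi_lt_d6
  have hπ : (0:ℝ) < π := Real.pi_pos
  constructor
  · rw [le_sub_comm, div_le_iff₀ hπ]; nlinarith
  · rw [sub_le_comm, le_div_iff₀ hπ]; nlinarith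

-- part 1 : small θ
lemma lemL1 {θ : ℝ} (h0 : 0 < θ) (h1 : θ ≤ 1.3) :
    0 < sin θ - θ + (1 - 2/π)*θ*(sin θ)^2 := by
  obtain ⟨hk1, hk2⟩ := k_bounds
  have hlo := sin_ge_cubic h0.le
  have hθ2 : θ^2 ≤ 1.69 := by nlinarith
  have hlonn : 0 ≤ θ - θ^3/6 := by nlinarith [mul_nonneg h0.le (sub_nonneg.2 hθ2)]
  have hsq : (θ - θ^3/6)^2 ≤ (sin θ)^2 := by nlinarith
  have hkey : 0 < (θ - θ^3/6) - θ + 0.3633*θ*(θ - θ^3/6)^2 := by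
    nlinarith [pow_pos h0 3, mul_pos (pow_pos h0 3) (mul_pos h0 h0),
      mul_nonneg (pow_pos h0 3).le (mul_nonneg (sub_nonneg.2 h1) h0.le),
      mul_nonneg (mul_nonneg (pow_pos h0 3).le (sub_nonneg.2 h1)) (sub_nonneg.2 h1)]
  have hmono : 0.3633*θ*(θ - θ^3/6)^2 ≤ (1 - 2/π)*θ*(sin θ)^2 := by
    have : 0.3633*θ*(θ - θ^3/6)^2 ≤ 0.3633*θ*(sin θ)^2 := by nlinarith
    nlinarith [sq_nonneg (sin θ), mul_nonneg h0.le (sq_nonneg (sin θ))]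
  linarith

lemma lemL2 {θ : ℝ} (h0 : 1.3 ≤ θ) (h1 : θ < π/2) :
    0 < sin θ - θ + (1 - 2/π)*θ*(sin θ)^2 := by
  obtain ⟨hk1, hk2⟩ := k_bounds
  set k : ℝ := 1 - 2/π with hk
  have hπ : (0:ℝ) < π := Real.pi_pos
  clear_value k
  set h : ℝ → ℝ := fun x => sin x - x + k*(x*(sin x)^2) with hh
  have hderiv : ∀ x : ℝ, HasDerivAt h (cos x - 1 + k*((sin x)^2 + x*(2*sin x*cos x))) x := by
    intro x
    have h1' := (Real.hasDerivAt_sin x).sub (hasDerivAt_id x)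
    have h2' : HasDerivAt (fun y : ℝ => y*(sin y)^2) ((sin x)^2 + x*(2*sin x*cos x)) x := by
      have := (hasDerivAt_id x).mul ((Real.hasDerivAt_sin x).pow 2)
      exact this.congr_deriv (by simp only [id_eq, Pi.pow_apply]; push_cast; ring)
    have := h1'.add (h2'.const_mul k)
    exact this.congr_deriv (by ring)
  have hanti : StrictAntiOn h (Set.Icc 1.3 (π/2)) := by
    apply strictAntiOn_of_deriv_neg (convex_Icc _ _)
    · exact Continuous.continuousOn (by fun_prop)
    · intro x hx
      rw [interior_Icc] at hx
      rw [(hderiv x).deriv]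
      have hx1 : (1.3:ℝ) < x := hx.1
      have hx2 : x < π/2 := hx.2
      have hc0 : 0 ≤ cos x := cos_nonneg_of_mem_Icc ⟨by linarith, hx2.le⟩
      have hcu : cos x ≤ π/2 - x := by
        rw [← Real.sin_pi_div_two_sub]
        exact Real.sin_le (by linarith)
      have hs1 : sin x ≤ 1 := sin_le_one x
      have hs0 : 0 ≤ sin x := sin_nonneg_of_nonneg_of_le_pi (by linarith) (by linarith)
      have hπ1 : π < 3.1416 := by linarith [Real.pi_lt_d6]
      have hπ2 : (3.1415:ℝ) < π := by linarith [Real.pi_gt_d6]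
      have hcub : cos x ≤ 0.2708 := by linarith
      have hx3 : x ≤ 1.5708 := by linarith
      have e1 : k*(sin x)^2 ≤ 0.3634 := by nlinarith [sq_nonneg (sin x), sq_nonneg (cos x), Real.sin_sq_add_cos_sq x]
      have hA : 0 ≤ x*(2*sin x*cos x) := by
        have := mul_nonneg hs0 hc0; nlinarith
      have h2 : x*(2*sin x*cos x) ≤ 1.5708*(2*cos x) := by
        nlinarith [mul_nonneg hs0 hc0, mul_nonneg hc0 (sub_nonneg.2 hs1), mul_nonneg hc0 (sub_nonneg.2 hx3)]
      have e2 : k*(x*(2*sin x*cos x)) ≤ 0.3634*(1.5708*(2*cos x)) := by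
        nlinarith [mul_le_mul_of_nonneg_right hk2 hA]
      have hexp : cos x - 1 + k * (sin x ^ 2 + x * (2 * sin x * cos x))
          = (cos x - 1) + k * sin x ^ 2 + k * (x * (2 * sin x * cos x)) := by ring
      rw [hexp]
      linarith
  have hval : h (π/2) = 0 := by
    simp [hh, Real.sin_pi_div_two, hk]
    field_simp
    ring
  have hmem1 : θ ∈ Set.Icc (1.3:ℝ) (π/2) := ⟨h0, h1.le⟩
  have hmem2 : (π/2) ∈ Set.Icc (1.3:ℝ) (π/2) := ⟨by nlinarith [Real.pi_gt_d6], le_rfl⟩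
  have := hanti hmem1 hmem2 h1
  rw [hval] at this
  simp only [hh] at this
  nlinarith [this]

lemma key_lower {t : ℝ} (ht : 0 < t) (ht1 : t < 1) : 1 - (1 - 2/π)*t^2 < t / arcsin t := by
  have hθ : 0 < arcsin t := arcsin_pos.2 ht
  have hθ2 : arcsin t < π/2 := arcsin_lt_pi_div_two.2 ht1
  have hsin : sin (arcsin t) = t := sin_arcsin (by linarith) ht1.le
  have hpos : 0 < sin (arcsin t) - arcsin t + (1 - 2/π)*(arcsin t)*(sin (arcsin t))^2 := by
    rcases le_or_gt (arcsin t) 1.3 with h | h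
    · exact lemL1 hθ h
    · exact lemL2 h.le hθ2
  rw [hsin] at hpos
  rw [lt_div_iff₀ hθ]
  nlinarith

lemma Cmean_comm (a b : ℝ) : Cmean a b = Cmean b a := by
  unfold Cmean; rw [add_comm a b, add_comm (a^2)]

lemma Hmean_comm (a b : ℝ) : Hmean a b = Hmean b a := by
  unfold Hmean; rw [add_comm a b]; ring_nf

lemma Pmean_comm (a b : ℝ) : Pmean a b = Pmean b a := by
  unfold Pmean
  rw [show (b - a)/(b + a) = -((a-b)/(a+b)) by ring, Real.arcsin_neg,
    show b - a = -(a-b) by ring]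
  ring

lemma means_formula {a b : ℝ} (hb : 0 < b) (hab : b < a) :
    0 < (a-b)/(a+b) ∧ (a-b)/(a+b) < 1 ∧
    Cmean a b = ((a+b)/2) * (1 + ((a-b)/(a+b))^2) ∧
    Hmean a b = ((a+b)/2) * (1 - ((a-b)/(a+b))^2) ∧
    Pmean a b = ((a+b)/2) * (((a-b)/(a+b)) / arcsin ((a-b)/(a+b))) := by
  have hs : 0 < a + b := by linarith
  have ht0 : 0 < (a-b)/(a+b) := div_pos (by linarith) hs
  have ht1 : (a-b)/(a+b) < 1 := (div_lt_one hs).2 (by linarith)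
  have harc : 0 < arcsin ((a-b)/(a+b)) := arcsin_pos.2 ht0
  refine ⟨ht0, ht1, ?_, ?_, ?_⟩
  · unfold Cmean; field_simp; ring
  · unfold Hmean; field_simp; ring
  · unfold Pmean; field_simp

lemma lower_core {α : ℝ} (hα : α ≤ 1/π) {a b : ℝ} (hb : 0 < b) (hab : b < a) :
    α * Cmean a b + (1 - α) * Hmean a b < Pmean a b := by
  obtain ⟨ht0, ht1, hC, hH, hP⟩ := means_formula hb hab
  set t := (a-b)/(a+b)
  have hA : 0 < (a+b)/2 := by linarith
  rw [hC, hH, hP]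
  have hkey := key_lower ht0 ht1
  have hπ : 0 < π := Real.pi_pos
  have hstep : α * ((a+b)/2 * (1+t^2)) + (1-α) * ((a+b)/2 * (1-t^2))
      = (a+b)/2 * (1 + (2*α - 1)*t^2) := by ring
  rw [hstep]
  apply mul_lt_mul_of_pos_left _ hA
  have h2 : (2*α - 1)*t^2 ≤ (2*(1/π) - 1)*t^2 := by nlinarith [sq_nonneg t]
  have : 1 + (2*(1/π) - 1)*t^2 = 1 - (1 - 2/π)*t^2 := by ring
  linarith

lemma upper_core {β : ℝ} (hβ : 5/12 ≤ β) {a b : ℝ} (hb : 0 < b) (hab : b < a) :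
    Pmean a b < β * Cmean a b + (1 - β) * Hmean a b := by
  obtain ⟨ht0, ht1, hC, hH, hP⟩ := means_formula hb hab
  set t := (a-b)/(a+b)
  have hA : 0 < (a+b)/2 := by linarith
  rw [hC, hH, hP]
  have hkey := key_upper ht0 ht1
  have hstep : β * ((a+b)/2 * (1+t^2)) + (1-β) * ((a+b)/2 * (1-t^2))
      = (a+b)/2 * (1 + (2*β - 1)*t^2) := by ring
  rw [hstep]
  apply mul_lt_mul_of_pos_left _ hA
  have h2 : (-(1:ℝ)/6)*t^2 ≤ (2*β - 1)*t^2 := by nlinarith [sq_nonneg t]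
  linarith

lemma lower_all {α : ℝ} (hα : α ≤ 1/π) {a b : ℝ} (ha : 0 < a) (hb : 0 < b) (hne : a ≠ b) :
    α * Cmean a b + (1 - α) * Hmean a b < Pmean a b := by
  rcases hne.lt_or_gt with h | h
  · rw [Cmean_comm, Hmean_comm, Pmean_comm]; exact lower_core hα ha h
  · exact lower_core hα hb h

lemma upper_all {β : ℝ} (hβ : 5/12 ≤ β) {a b : ℝ} (ha : 0 < a) (hb : 0 < b) (hne : a ≠ b) :
    Pmean a b < β * Cmean a b + (1 - β) * Hmean a b := by
  rcases hne.lt_or_gt with h | h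
  · rw [Cmean_comm, Hmean_comm, Pmean_comm]; exact upper_core hβ ha h
  · exact upper_core hβ hb h

lemma sin_lt_one_of_cos_pos {θ : ℝ} (hcos : 0 < cos θ) : sin θ < 1 := by
  nlinarith [Real.sin_sq_add_cos_sq θ, mul_pos hcos hcos, Real.sin_le_one θ,
    Real.neg_one_le_sin θ]

lemma means_one {t : ℝ} :
    Cmean (1+t) (1-t) = 1 + t^2 ∧ Hmean (1+t) (1-t) = 1 - t^2 ∧
    Pmean (1+t) (1-t) = t / arcsin t := by
  have h1 : (1+t) + (1-t) = 2 := by ring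
  have h2 : (1+t) - (1-t) = 2*t := by ring
  refine ⟨?_, ?_, ?_⟩
  · unfold Cmean; rw [h1]; ring_nf
  · unfold Hmean; rw [h1]; ring_nf
  · unfold Pmean
    rw [h1, h2, show (2*t)/2 = t by ring]
    exact mul_div_mul_left t (arcsin t) two_ne_zero

-- sharpness of 1/π
lemma alpha_sharp {α : ℝ}
    (hyp : ∀ a b : ℝ, 0 < a → 0 < b → a ≠ b →
        α * Cmean a b + (1 - α) * Hmean a b < Pmean a b) : α ≤ 1/π := by
  by_contra hα
  push_neg at hα
  have hπ : 0 < π := Real.pi_pos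
  set F : ℝ → ℝ := fun t => (1 + (2*α-1)*t^2) - t / arcsin t with hF
  have hcont : ContinuousAt F 1 := by
    apply ContinuousAt.sub
    · fun_prop
    · apply ContinuousAt.div continuousAt_id Real.continuous_arcsin.continuousAt
      rw [Real.arcsin_one]; positivity
  have hF1 : 0 < F 1 := by
    have harc : (1:ℝ) / arcsin 1 = 2/π := by
      rw [Real.arcsin_one]; field_simp
    have h2π : 2/π < 2*α := by
      have he : 2*(1/π) = 2/π := by ring
      linarith
    simp only [hF, one_pow, mul_one]
    rw [harc]
    linarith
  have hev0 : ∀ᶠ t in nhds (1:ℝ), 0 < F t := hcont.eventually (eventually_gt_nhds hF1)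
  have hev : ∀ᶠ t in nhdsWithin (1:ℝ) (Set.Iio 1), 0 < F t ∧ 0 < t :=
    (hev0.and (eventually_gt_nhds one_pos)).filter_mono nhdsWithin_le_nhds
  have hlt : ∀ᶠ t in nhdsWithin (1:ℝ) (Set.Iio 1), t < 1 :=
    eventually_mem_nhdsWithin.mono (fun x hx => hx)
  obtain ⟨t, ⟨hFt, ht0⟩, ht1⟩ := (hev.and hlt).exists
  obtain ⟨hC, hH, hP⟩ := means_one (t := t)
  have h := hyp (1+t) (1-t) (by linarith) (by linarith)
    (by intro he; exact ht0.ne' (by linarith))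
  rw [hC, hH, hP] at h
  have he2 : α*(1+t^2)+(1-α)*(1-t^2) = 1+(2*α-1)*t^2 := by ring
  rw [he2] at h
  simp only [hF] at hFt
  linarith

-- sharpness of 5/12
set_option maxHeartbeats 1000000 in
lemma beta_sharp {β : ℝ}
    (hyp : ∀ a b : ℝ, 0 < a → 0 < b → a ≠ b →
        Pmean a b < β * Cmean a b + (1 - β) * Hmean a b) : β ≥ 5/12 := by
  by_contra hβ
  push_neg at hβ
  set β' : ℝ := max β (1/3) with hβ'
  have hβ'1 : β' < 5/12 := max_lt hβ (by norm_num)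
  have hβ'2 : β ≤ β' := le_max_left _ _
  have hβ'3 : 1/3 ≤ β' := le_max_right _ _
  clear_value β'
  set c : ℝ := 1 - 2*β' with hc
  have hc1 : 1/6 < c := by rw [hc]; linarith
  have hc2 : c ≤ 1/3 := by rw [hc]; linarith
  have hc0 : 0 < c := by linarith
  clear_value c
  set θ : ℝ := Real.sqrt (3*(1 - 1/(6*c))) with hθdef
  have hδ0 : 0 < 1 - 1/(6*c) := by
    rw [sub_pos, div_lt_one (by linarith)]; linarith
  have hδ1 : 1 - 1/(6*c) ≤ 1/2 := by
    have : (1:ℝ)/2 ≤ 1/(6*c) := by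
      rw [div_le_div_iff₀ (by norm_num) (by linarith)]; linarith
    linarith
  have hθ0 : 0 < θ := Real.sqrt_pos.2 (by linarith)
  have hθsq : θ^2 = 3*(1 - 1/(6*c)) := Real.sq_sqrt (by linarith)
  clear_value θ
  have hθsq' : θ^2 ≤ 3/2 := by rw [hθsq]; linarith
  have hθlt : θ < π/2 := by nlinarith [Real.pi_gt_d6]
  -- key: sin θ - θ + c θ sin²θ ≥ 0
  have hlo := sin_ge_cubic hθ0.le
  have hlonn : 0 ≤ θ - θ^3/6 := by nlinarith
  have hsq : (θ - θ^3/6)^2 ≤ (sin θ)^2 := by nlinarith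
  have hq : 1/(6*c) ≤ (1 - θ^2/6)^2 := by
    have h1 : 1 - θ^2/3 ≤ (1 - θ^2/6)^2 := by nlinarith [sq_nonneg (θ^2)]
    have h2 : 1 - θ^2/3 = 1/(6*c) := by
      rw [hθsq]; ring
    linarith
  have hkey : 0 ≤ sin θ - θ + c*θ*(sin θ)^2 := by
    have e1 : c*θ*(θ - θ^3/6)^2 ≤ c*θ*(sin θ)^2 :=
      mul_le_mul_of_nonneg_left hsq (by positivity)
    have e2 : θ^3/6 ≤ c*θ*(θ - θ^3/6)^2 := by
      have : c*θ*(θ - θ^3/6)^2 = θ^3 * (c * (1 - θ^2/6)^2) := by ring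
      rw [this]
      have h6 : θ^3 * (c * (1/(6*c))) ≤ θ^3 * (c * (1 - θ^2/6)^2) := by
        apply mul_le_mul_of_nonneg_left _ (by positivity)
        exact mul_le_mul_of_nonneg_left hq hc0.le
      have h7 : c * (1/(6*c)) = 1/6 := by field_simp
      rw [h7] at h6
      linarith
    linarith
  -- now build the witness
  set t : ℝ := sin θ with ht
  clear_value t
  have hθπ : θ < π := by nlinarith [Real.pi_gt_d6]
  have ht0 : 0 < t := by rw [ht]; exact sin_pos_of_pos_of_lt_pi hθ0 hθπ
  have hcos : 0 < cos θ := Real.cos_pos_of_mem_Ioo ⟨by linarith, hθlt⟩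
  have ht1 : t < 1 := by rw [ht]; exact sin_lt_one_of_cos_pos hcos
  have harc : arcsin t = θ := by
    rw [ht]; exact Real.arcsin_sin (by linarith) hθlt.le
  obtain ⟨hC, hH, hP⟩ := means_one (t := t)
  have h := hyp (1+t) (1-t) (by linarith) (by linarith)
    (by intro he; exact ht0.ne' (by linarith))
  rw [hC, hH, hP, harc] at h
  -- h : t/θ < β(1+t²)+(1-β)(1-t²) = 1+(2β-1)t² ≤ 1 - c t²
  have he2 : β*(1+t^2)+(1-β)*(1-t^2) = 1+(2*β-1)*t^2 := by ring
  rw [he2] at h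
  have hmono : 1+(2*β-1)*t^2 ≤ 1 - c*t^2 := by
    rw [hc]; nlinarith [sq_nonneg t]
  have hge : 1 - c*t^2 ≤ t/θ := by
    rw [le_div_iff₀ hθ0]
    nlinarith
  linarith

theorem sharp_stmt_12 :
    (∀ a b : ℝ, 0 < a → 0 < b → a ≠ b →
        (1 / Real.pi) * Cmean a b + (1 - (1 / Real.pi)) * Hmean a b < Pmean a b ∧
        Pmean a b < (5 / 12) * Cmean a b + (1 - (5 / 12)) * Hmean a b) ∧
    (∀ α : ℝ, (∀ a b : ℝ, 0 < a → 0 < b → a ≠ b →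
        α * Cmean a b + (1 - α) * Hmean a b < Pmean a b) ↔ α ≤ (1 / Real.pi)) ∧
    (∀ β : ℝ, (∀ a b : ℝ, 0 < a → 0 < b → a ≠ b →
        Pmean a b < β * Cmean a b + (1 - β) * Hmean a b) ↔ β ≥ (5 / 12)) := by
  refine ⟨fun a b ha hb hne => ⟨lower_all (le_refl _) ha hb hne,
      upper_all (le_refl _) ha hb hne⟩,
    fun α => ⟨alpha_sharp, fun hα a b ha hb hne => lower_all hα ha hb hne⟩,
    fun β => ⟨beta_sharp, fun hβ a b ha hb hne => upper_all hβ ha hb hne⟩⟩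
end

section
/- For all a, b > 0 with a ≠ b, α·S(a,b) + (1-α)·A(a,b) < T(a,b) < β·S(a,b) + (1-β)·A(a,b) holds with α = (4-π)/((√2 - 1)π) and β = 2/3, and these constants are best possible. -/
open Real

open Set

noncomputable def al : ℝ := (4 - π) / ((Real.sqrt 2 - 1) * π)

lemma sqrt2_gt_one : (1:ℝ) < Real.sqrt 2 := by
  have h : (1:ℝ) = Real.sqrt 1 := Real.sqrt_one.symm
  rw [h]; exact Real.sqrt_lt_sqrt (by norm_num) (by norm_num)
lemma al_pos : 0 < al := by
  have h := sqrt2_gt_one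
  have hπ := Real.pi_pos
  have hπ4 : π < 4 := by linarith [Real.pi_lt_d2]
  exact div_pos (by linarith) (mul_pos (by linarith) hπ)
lemma al_id : al * (Real.sqrt 2 - 1) = 4 / π - 1 := by
  rw [al]
  have h1 : Real.sqrt 2 - 1 ≠ 0 := by have := sqrt2_gt_one; intro h; linarith [sub_eq_zero.mp h]
  have hπ : π ≠ 0 := Real.pi_ne_zero
  field_simp

lemma F_pi4 : Real.sin (π/4) = (π/4) * (al + (1 - al) * Real.cos (π/4)) := by
  rw [Real.sin_pi_div_four, Real.cos_pi_div_four, al]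
  have hs2 : Real.sqrt 2 ^ 2 = 2 := Real.sq_sqrt (by norm_num)
  have h1 : Real.sqrt 2 - 1 ≠ 0 := by have := sqrt2_gt_one; intro h; linarith [sub_eq_zero.mp h]
  have hπ : π ≠ 0 := Real.pi_ne_zero
  field_simp
  linear_combination (4-π) * hs2

noncomputable def gg (x : ℝ) : ℝ := (1 - al) * x - al * Real.tan (x/2)
noncomputable def gg' (x : ℝ) : ℝ := (1 - al) - al/2 * (1 / Real.cos (x/2)^2)
noncomputable def FF (x : ℝ) : ℝ := Real.sin x - x * (al + (1 - al) * Real.cos x)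

lemma cos_half_pos {x : ℝ} (h0 : 0 ≤ x) (h1 : x ≤ π/4) : 0 < Real.cos (x/2) := by
  apply Real.cos_pos_of_mem_Ioo
  have := Real.pi_pos
  constructor <;> [skip; skip] <;> linarith

lemma hasDerivAt_gg {x : ℝ} (hc : Real.cos (x/2) ≠ 0) : HasDerivAt gg (gg' x) x := by
  have h1 : HasDerivAt (fun y : ℝ => Real.tan (y/2)) (1 / Real.cos (x/2)^2 * (1/2)) x := by
    have h2 : HasDerivAt (fun y : ℝ => y/2) ((1:ℝ)/2) x := by
      simpa using (hasDerivAt_id x).div_const 2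
    exact (Real.hasDerivAt_tan hc).comp x h2
  have h3 : HasDerivAt gg ((1 - al) * 1 - al * (1 / Real.cos (x/2)^2 * (1/2))) x :=
    ((hasDerivAt_id x).const_mul (1 - al)).sub (h1.const_mul al)
  convert h3 using 1
  rw [gg']; ring

lemma gg'_anti {x y : ℝ} (hx : 0 ≤ x) (hxy : x < y) (hy : y ≤ π/4) : gg' y < gg' x := by
  have hcx := cos_half_pos hx (by linarith)
  have hcy := cos_half_pos (by linarith) hy
  have hlt : Real.cos (y/2) < Real.cos (x/2) := by
    apply Real.cos_lt_cos_of_nonneg_of_le_pi (by linarith)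
    · have := Real.pi_pos; linarith
    · linarith
  have h2 : Real.cos (y/2)^2 < Real.cos (x/2)^2 := by nlinarith
  have h3 : 1 / Real.cos (x/2)^2 < 1 / Real.cos (y/2)^2 :=
    one_div_lt_one_div_of_lt (by positivity) h2
  have := al_pos
  rw [gg', gg']
  nlinarith

lemma gg_zero : gg 0 = 0 := by simp [gg]

lemma gg_decr {x y : ℝ} (hx : 0 < x) (hxy : x < y) (hy : y ≤ π/4) (hgx : gg x ≤ 0) :
    gg y < gg x := by
  have hcont : ∀ z ∈ Icc (0:ℝ) (π/4), ContinuousAt gg z := by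
    intro z hz
    exact (hasDerivAt_gg (cos_half_pos hz.1 hz.2).ne').continuousAt
  obtain ⟨ξ, hξ, hξeq⟩ := exists_hasDerivAt_eq_slope gg gg' hx
    (fun z hz => (hcont z ⟨hz.1, by linarith [hz.2]⟩).continuousWithinAt)
    (fun z hz => hasDerivAt_gg (cos_half_pos hz.1.le (by linarith [hz.2])).ne')
  obtain ⟨η, hη, hηeq⟩ := exists_hasDerivAt_eq_slope gg gg' hxy
    (fun z hz => (hcont z ⟨by linarith [hz.1], by linarith [hz.2]⟩).continuousWithinAt)
    (fun z hz => hasDerivAt_gg (cos_half_pos (by linarith [hz.1]) (by linarith [hz.2])).ne')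
  have h1 : gg' ξ ≤ 0 := by
    rw [hξeq, gg_zero]
    apply div_nonpos_of_nonpos_of_nonneg (by linarith) (by linarith)
  have h2 : gg' η < gg' ξ := gg'_anti (by linarith [hξ.1]) (by linarith [hξ.2, hη.1]) (by linarith [hη.2])
  have h3 : gg y - gg x = gg' η * (y - x) := by
    rw [hηeq]
    rw [div_mul_cancel₀ _ (by linarith : y - x ≠ 0)]
  nlinarith [h3]

lemma FF_zero : FF 0 = 0 := by simp [FF]

lemma FF_pi4 : FF (π/4) = 0 := by rw [FF, F_pi4]; ring

lemma hasDerivAt_FF {x : ℝ} (hc : Real.cos (x/2) ≠ 0) :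
    HasDerivAt FF (Real.sin x * gg x) x := by
  have h1 : HasDerivAt (fun y : ℝ => y * (al + (1 - al) * Real.cos y))
      (1 * (al + (1 - al) * Real.cos x) + x * ((1 - al) * (-Real.sin x))) x :=
    (hasDerivAt_id x).mul (((Real.hasDerivAt_cos x).const_mul (1 - al)).const_add al)
  have h2 : HasDerivAt FF (Real.cos x - (1 * (al + (1 - al) * Real.cos x) + x * ((1 - al) * (-Real.sin x)))) x :=
    (Real.hasDerivAt_sin x).sub h1
  convert h2 using 1
  have hsin : Real.sin x = 2 * Real.sin (x/2) * Real.cos (x/2) := by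
    rw [show x = 2*(x/2) by ring, Real.sin_two_mul]; ring_nf
  have hcos : Real.cos x = 1 - 2 * Real.sin (x/2)^2 := by
    rw [show x = 2*(x/2) by ring, Real.cos_two_mul', Real.cos_sq' (x/2)]; ring_nf
  rw [gg, Real.tan_eq_sin_div_cos, hsin, hcos]
  field_simp
  ring

lemma FF_cont : Continuous FF := by
  unfold FF; continuity

lemma sin_pos_of_Ioo {x : ℝ} (h0 : 0 < x) (h1 : x ≤ π/4) : 0 < Real.sin x := by
  apply Real.sin_pos_of_pos_of_lt_pi h0
  have := Real.pi_pos; linarith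

lemma FF_pos {θ : ℝ} (h0 : 0 < θ) (h1 : θ < π/4) : 0 < FF θ := by
  by_cases hg : 0 < gg θ
  · have hgpos : ∀ x ∈ Ioo 0 θ, 0 < gg x := by
      intro x hx
      by_contra hcon
      push_neg at hcon
      have := gg_decr hx.1 hx.2 h1.le hcon
      linarith
    have hmono : StrictMonoOn FF (Icc 0 θ) := by
      apply strictMonoOn_of_deriv_pos (convex_Icc 0 θ) FF_cont.continuousOn
      intro x hx
      rw [interior_Icc] at hx
      rw [(hasDerivAt_FF (cos_half_pos hx.1.le (by linarith [hx.2])).ne').deriv]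
      exact mul_pos (sin_pos_of_Ioo hx.1 (by linarith [hx.2])) (hgpos x hx)
    have := hmono (left_mem_Icc.2 h0.le) (right_mem_Icc.2 h0.le) h0
    rwa [FF_zero] at this
  · push_neg at hg
    have hgneg : ∀ x ∈ Ioo θ (π/4), gg x < 0 := by
      intro x hx
      have := gg_decr h0 hx.1 hx.2.le hg
      linarith
    have hanti : StrictAntiOn FF (Icc θ (π/4)) := by
      apply strictAntiOn_of_deriv_neg (convex_Icc _ _) FF_cont.continuousOn
      intro x hx
      rw [interior_Icc] at hx
      rw [(hasDerivAt_FF (cos_half_pos (by linarith [hx.1]) (by linarith [hx.2])).ne').deriv]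
      exact mul_neg_of_pos_of_neg (sin_pos_of_Ioo (by linarith [hx.1]) (by linarith [hx.2])) (hgneg x hx)
    have := hanti (left_mem_Icc.2 h1.le) (right_mem_Icc.2 h1.le) h1
    rwa [FF_pi4] at this

lemma key_lower_s13 {θ : ℝ} (h0 : 0 < θ) (h1 : θ < π/4) :
    θ * (al + (1 - al) * Real.cos θ) < Real.sin θ := by
  have := FF_pos h0 h1; rw [FF] at this; linarith

noncomputable def HH (x : ℝ) : ℝ := x * (2 + Real.cos x) - 3 * Real.sin x
noncomputable def HH1 (x : ℝ) : ℝ := 2 - 2 * Real.cos x - x * Real.sin x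

lemma hasDerivAt_HH (x : ℝ) : HasDerivAt HH (HH1 x) x := by
  have h1 : HasDerivAt (fun y : ℝ => y * (2 + Real.cos y))
      (1 * (2 + Real.cos x) + x * (-Real.sin x)) x :=
    (hasDerivAt_id x).mul ((Real.hasDerivAt_cos x).const_add 2)
  have h2 := h1.sub ((Real.hasDerivAt_sin x).const_mul 3)
  refine h2.congr_deriv ?_
  rw [HH1]; ring

lemma hasDerivAt_HH1 (x : ℝ) : HasDerivAt HH1 (Real.sin x - x * Real.cos x) x := by
  have h1 : HasDerivAt (fun y : ℝ => y * Real.sin y)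
      (1 * Real.sin x + x * Real.cos x) x := (hasDerivAt_id x).mul (Real.hasDerivAt_sin x)
  have h2 := (((Real.hasDerivAt_cos x).const_mul 2).const_sub 2).sub h1
  refine h2.congr_deriv ?_
  ring

lemma HH1_pos {x : ℝ} (h0 : 0 < x) (h1 : x ≤ π/4) : 0 < HH1 x := by
  have hmono : StrictMonoOn HH1 (Icc 0 (π/4)) := by
    apply strictMonoOn_of_deriv_pos (convex_Icc _ _)
    · have : Continuous HH1 := by unfold HH1; continuity
      exact this.continuousOn
    · intro y hy
      rw [interior_Icc] at hy
      rw [(hasDerivAt_HH1 y).deriv]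
      have hcos : 0 < Real.cos y := by
        apply Real.cos_pos_of_mem_Ioo
        constructor <;> [skip; skip] <;> (have := Real.pi_pos; simp only [Set.mem_Ioo] at hy ⊢) <;> linarith [hy.1, hy.2]
      have htan : y < Real.tan y := Real.lt_tan hy.1 (by have := Real.pi_pos; linarith [hy.2])
      rw [Real.tan_eq_sin_div_cos, lt_div_iff₀ hcos] at htan
      linarith
  have := hmono (left_mem_Icc.2 (by positivity)) ⟨h0.le, h1⟩ h0
  simpa [HH1] using this

lemma key_upper_s13 {θ : ℝ} (h0 : 0 < θ) (h1 : θ < π/4) :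
    3 * Real.sin θ < θ * (2 + Real.cos θ) := by
  have hmono : StrictMonoOn HH (Icc 0 (π/4)) := by
    apply strictMonoOn_of_deriv_pos (convex_Icc _ _)
    · have : Continuous HH := by unfold HH; continuity
      exact this.continuousOn
    · intro y hy
      rw [interior_Icc] at hy
      rw [(hasDerivAt_HH y).deriv]
      exact HH1_pos hy.1 hy.2.le
  have := hmono (left_mem_Icc.2 (by positivity)) ⟨h0.le, h1.le⟩ h0
  simp only [HH] at this
  simp at this
  linarith

lemma arctan_lt_quintic {t : ℝ} (h0 : 0 < t) (h1 : t ≤ 1) :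
    Real.arctan t < t - t^3/3 + t^5/5 := by
  have hmono : StrictMonoOn (fun x : ℝ => x - x^3/3 + x^5/5 - Real.arctan x) (Icc 0 1) := by
    apply strictMonoOn_of_deriv_pos (convex_Icc _ _)
    · have : Continuous (fun x : ℝ => x - x^3/3 + x^5/5 - Real.arctan x) := by
        continuity
      exact this.continuousOn
    · intro x hx
      rw [interior_Icc] at hx
      have hd : HasDerivAt (fun x : ℝ => x - x^3/3 + x^5/5 - Real.arctan x)
          ((1 - (3:ℕ) * x^2 / 3 + (5:ℕ) * x^4 / 5) - 1/(1+x^2)) x := by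
        have := (((hasDerivAt_id x).sub ((hasDerivAt_pow 3 x).div_const 3)).add
          ((hasDerivAt_pow 5 x).div_const 5)).sub (Real.hasDerivAt_arctan x)
        exact this
      rw [hd.deriv]
      have hden : (0:ℝ) < 1 + x^2 := by positivity
      rw [show ((1:ℝ) - (3:ℕ) * x^2 / 3 + (5:ℕ) * x^4 / 5) - 1/(1+x^2) = x^6/(1+x^2) by
        push_cast; field_simp; ring]
      exact div_pos (pow_pos hx.1 6) hden
  have := hmono (left_mem_Icc.2 (by norm_num)) ⟨h0.le, h1⟩ h0
  norm_num [Real.arctan_zero] at this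
  linarith

lemma arctan_lt_self {t : ℝ} (h0 : 0 < t) : Real.arctan t < t := by
  have hmono : StrictMonoOn (fun x : ℝ => x - Real.arctan x) (Icc 0 t) := by
    apply strictMonoOn_of_deriv_pos (convex_Icc _ _)
    · have : Continuous (fun x : ℝ => x - Real.arctan x) := by continuity
      exact this.continuousOn
    · intro x hx
      rw [interior_Icc] at hx
      have hd : HasDerivAt (fun x : ℝ => x - Real.arctan x) (1 - 1/(1+x^2)) x := by
        exact (hasDerivAt_id x).sub (Real.hasDerivAt_arctan x)
      rw [hd.deriv]
      have hden : (0:ℝ) < 1 + x^2 := by positivity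
      rw [show (1:ℝ) - 1/(1+x^2) = x^2/(1+x^2) by field_simp; ring]
      exact div_pos (pow_pos hx.1 2) hden
  have := hmono (left_mem_Icc.2 h0.le) (right_mem_Icc.2 h0.le) h0
  simp only [Real.arctan_zero] at this
  linarith

lemma arctan_pos' {t : ℝ} (h0 : 0 < t) : 0 < Real.arctan t := by
  rw [show (0:ℝ) = Real.arctan 0 by simp]
  exact Real.arctan_strictMono h0

lemma Amean_comm (a b : ℝ) : Amean a b = Amean b a := by unfold Amean; ring_nf
lemma Smean_comm (a b : ℝ) : Smean a b = Smean b a := by unfold Smean; ring_nf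
lemma Tmean_comm (a b : ℝ) : Tmean a b = Tmean b a := by
  unfold Tmean
  rw [show (a - b) / (a + b) = -((b-a)/(b+a)) by rw [add_comm a b]; ring, Real.arctan_neg, mul_neg]
  rw [show a - b = -(b-a) by ring, neg_div_neg_eq]

lemma A_lt_S {a b : ℝ} (ha : 0 < a) (hb : 0 < b) (hab : a ≠ b) : Amean a b < Smean a b := by
  rw [Amean, Smean]
  rw [show (a+b)/2 = Real.sqrt (((a+b)/2)^2) from (Real.sqrt_sq (by positivity)).symm]
  apply Real.sqrt_lt_sqrt (by positivity)
  have h1 : a - b ≠ 0 := sub_ne_zero.2 hab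
  have h2 : 0 < (a-b)^2 := lt_of_le_of_ne (sq_nonneg _) (Ne.symm (pow_ne_zero 2 h1))
  nlinarith

lemma main_core {a b : ℝ} (hb : 0 < b) (hba : b < a) :
    al * Smean a b + (1 - al) * Amean a b < Tmean a b ∧
    Tmean a b < 2/3 * Smean a b + (1 - 2/3) * Amean a b := by
  have hab : 0 < a + b := by linarith
  set t := (a - b)/(a + b) with htdef
  have ht0 : 0 < t := div_pos (by linarith) hab
  have ht1 : t < 1 := (div_lt_one hab).2 (by linarith)
  set θ := Real.arctan t with hθdef
  have hθ0 : 0 < θ := arctan_pos' ht0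
  have hθ1 : θ < π/4 := by
    rw [hθdef, ← Real.arctan_one]
    exact Real.arctan_strictMono ht1
  set u := Real.sqrt (1 + t^2) with hudef
  have hu0 : 0 < u := Real.sqrt_pos.2 (by positivity)
  have hc : Real.cos θ = 1 / u := Real.cos_arctan t
  have hs : Real.sin θ = t / u := Real.sin_arctan t
  set A := (a+b)/2 with hA
  have hA0 : 0 < A := by positivity
  have hS : Smean a b = A * u := by
    rw [Smean, hudef, show (a^2+b^2)/2 = A^2 * (1 + t^2) by
      rw [hA, htdef]; field_simp; ring]
    rw [Real.sqrt_mul (by positivity), Real.sqrt_sq hA0.le]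
  have hT : Tmean a b = A * t / θ := by
    rw [Tmean, ← htdef, ← hθdef, show a - b = 2*A*t by rw [hA, htdef]; field_simp]
    ring
  have hAm : Amean a b = A := rfl
  constructor
  · have key := key_lower_s13 hθ0 hθ1
    rw [hc, hs] at key
    have key' : θ * (al * u + (1 - al)) < t := by
      calc θ * (al * u + (1 - al)) = (θ * (al + (1-al) * (1/u))) * u := by
            field_simp
            try ring
        _ < (t/u) * u := by exact mul_lt_mul_of_pos_right key hu0
        _ = t := div_mul_cancel₀ t hu0.ne'
    rw [hS, hT, hAm, lt_div_iff₀ hθ0]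
    nlinarith [mul_lt_mul_of_pos_left key' hA0]
  · have key := key_upper_s13 hθ0 hθ1
    rw [hc, hs] at key
    have key' : 3 * t < θ * (2 * u + 1) := by
      calc 3 * t = (3 * (t/u)) * u := by field_simp
        _ < (θ * (2 + 1/u)) * u := by exact mul_lt_mul_of_pos_right key hu0
        _ = θ * (2 * u + 1) := by
            field_simp
            try ring
    rw [hS, hT, hAm, div_lt_iff₀ hθ0]
    nlinarith [mul_lt_mul_of_pos_left key' hA0]

lemma part1 : ∀ a b : ℝ, 0 < a → 0 < b → a ≠ b →
    al * Smean a b + (1 - al) * Amean a b < Tmean a b ∧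
    Tmean a b < 2/3 * Smean a b + (1 - 2/3) * Amean a b := by
  intro a b ha hb hab
  rcases lt_or_gt_of_ne hab with h | h
  · rw [Amean_comm, Smean_comm, Tmean_comm]
    exact main_core ha h
  · exact main_core hb h

lemma mean_vals {t : ℝ} (h0 : 0 < t) (h1 : t < 1) :
    Smean (1+t) (1-t) = Real.sqrt (1+t^2) ∧ Amean (1+t) (1-t) = 1 ∧
    Tmean (1+t) (1-t) = t / Real.arctan t := by
  refine ⟨?_, ?_, ?_⟩
  · rw [Smean]; congr 1; ring
  · rw [Amean]; ring
  · rw [Tmean, show (1+t) - (1-t) = 2*t by ring, show (1+t) + (1-t) = 2 by ring,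
      show 2*t/2 = t by ring]
    rw [show (2:ℝ) * Real.arctan t = 2 * Real.arctan t from rfl]
    exact mul_div_mul_left t (Real.arctan t) two_ne_zero

lemma part2 (α : ℝ) : (∀ a b : ℝ, 0 < a → 0 < b → a ≠ b →
    α * Smean a b + (1 - α) * Amean a b < Tmean a b) ↔ α ≤ al := by
  constructor
  · intro h
    by_contra hα
    push_neg at hα
    have hcont : ContinuousAt (fun t : ℝ => α * Real.sqrt (1 + t^2) + (1 - α) - t / Real.arctan t) 1 := by
      apply ContinuousAt.sub
      · apply ContinuousAt.add
        · exact continuousAt_const.mul ((Real.continuous_sqrt.continuousAt).comp (by fun_prop))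
        · exact continuousAt_const
      · exact continuousAt_id.div Real.continuous_arctan.continuousAt
          (by rw [Real.arctan_one]; positivity)
    have hval : (0:ℝ) < α * Real.sqrt (1 + 1^2) + (1 - α) - 1 / Real.arctan 1 := by
      rw [Real.arctan_one, show (1:ℝ)+1^2 = 2 by norm_num]
      have hid := al_id
      have hπ := Real.pi_pos
      have hs := sqrt2_gt_one
      rw [show (1:ℝ) / (π/4) = 4/π by rw [one_div_div]]
      nlinarith [mul_lt_mul_of_pos_right hα (show (0:ℝ) < Real.sqrt 2 - 1 by linarith)]
    have hev : ∀ᶠ x in nhdsWithin (1:ℝ) (Set.Iio 1),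
        0 < α * Real.sqrt (1 + x^2) + (1 - α) - x / Real.arctan x :=
      (hcont.tendsto.eventually (eventually_gt_nhds hval)).filter_mono nhdsWithin_le_nhds
    have hmem : Set.Ioo (0:ℝ) 1 ∈ nhdsWithin (1:ℝ) (Set.Iio 1) :=
      Ioo_mem_nhdsLT_of_mem ⟨by norm_num, le_refl 1⟩
    obtain ⟨t, htψ, ht⟩ := (hev.and (Filter.eventually_of_mem hmem fun x hx => hx)).exists
    obtain ⟨hSv, hAv, hTv⟩ := mean_vals ht.1 ht.2
    have happ := h (1+t) (1-t) (by linarith [ht.1]) (by linarith [ht.2])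
      (by intro he; exact absurd (show t = 0 by linarith) (ne_of_gt ht.1))
    rw [hSv, hAv, hTv] at happ
    linarith
  · intro hα a b ha hb hab
    have h1 := (part1 a b ha hb hab).1
    have h2 := A_lt_S ha hb hab
    nlinarith [mul_le_mul_of_nonneg_right hα (sub_nonneg.2 h2.le)]

lemma part3 (β : ℝ) : (∀ a b : ℝ, 0 < a → 0 < b → a ≠ b →
    Tmean a b < β * Smean a b + (1 - β) * Amean a b) ↔ β ≥ 2/3 := by
  constructor
  · intro h
    by_contra hβ
    push_neg at hβ
    have hr0 : (0:ℝ) < 5*(2 - 3*β)/6 := by linarith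
    obtain ⟨t, ht0, ht1, hth, htr⟩ : ∃ t : ℝ, 0 < t ∧ t < 1 ∧ t ≤ 1/2 ∧ t^2 ≤ 5*(2 - 3*β)/6 := by
      refine ⟨min (1/2) (Real.sqrt (5*(2 - 3*β)/6)), lt_min (by norm_num) (Real.sqrt_pos.2 hr0),
        lt_of_le_of_lt (min_le_left _ _) (by norm_num), min_le_left _ _, ?_⟩
      have h1 : min (1/2) (Real.sqrt (5*(2 - 3*β)/6)) ≤ Real.sqrt (5*(2 - 3*β)/6) :=
        min_le_right _ _
      have h2 : (0:ℝ) ≤ min (1/2) (Real.sqrt (5*(2 - 3*β)/6)) :=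
        le_min (by norm_num) (Real.sqrt_nonneg _)
      nlinarith [Real.sq_sqrt hr0.le, mul_nonneg (sub_nonneg.2 h1)
        (by positivity : (0:ℝ) ≤ Real.sqrt (5*(2 - 3*β)/6) + min (1/2) (Real.sqrt (5*(2 - 3*β)/6)))]
    obtain ⟨hSv, hAv, hTv⟩ := mean_vals ht0 ht1
    have happ := h (1+t) (1-t) (by linarith) (by linarith)
      (by intro he; exact absurd (show t = 0 by linarith) (ne_of_gt ht0))
    rw [hSv, hAv, hTv] at happ
    have hat0 : 0 < Real.arctan t := arctan_pos' ht0
    have hatle : Real.arctan t < t := arctan_lt_self ht0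
    have hquint : Real.arctan t < t - t^3/3 + t^5/5 := arctan_lt_quintic ht0 ht1.le
    have hnum : 0 ≤ t^3/3 - t^5/5 := by
      have hsq : t^2 ≤ 1/4 := by nlinarith
      nlinarith [mul_le_mul_of_nonneg_left hsq (pow_pos ht0 3).le, pow_pos ht0 3]
    have hdiv : (t^3/3 - t^5/5)/t ≤ (t - Real.arctan t)/(Real.arctan t) :=
      div_le_div₀ (by linarith) (by linarith) hat0 hatle.le
    have hdiv2 : (t^3/3 - t^5/5)/t = t^2/3 - t^4/5 := by field_simp
    have hTlow : 1 + (t^2/3 - t^4/5) ≤ t / Real.arctan t := by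
      have heq : t / Real.arctan t = 1 + (t - Real.arctan t)/(Real.arctan t) := by
        field_simp
        ring
      rw [heq, ← hdiv2]
      linarith
    have hsqge : 1 ≤ Real.sqrt (1+t^2) := by
      nlinarith [Real.sq_sqrt (show (0:ℝ) ≤ 1+t^2 by positivity),
        Real.sqrt_nonneg (1+t^2), sq_nonneg t]
    rcases le_or_gt β 0 with hb0 | hb0
    · nlinarith [mul_nonpos_of_nonpos_of_nonneg hb0 (sub_nonneg.2 hsqge)]
    · have hsqle : Real.sqrt (1+t^2) ≤ 1 + t^2/2 := by
        have h2 := Real.sqrt_le_sqrt (show (1:ℝ)+t^2 ≤ (1+t^2/2)^2 by nlinarith [sq_nonneg t, sq_nonneg (t^2)])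
        rwa [Real.sqrt_sq (by positivity)] at h2
      have hb1 : β * Real.sqrt (1+t^2) ≤ β * (1 + t^2/2) :=
        mul_le_mul_of_nonneg_left hsqle hb0.le
      have hkey : 0 ≤ t^2 * (1/3 - t^2/5 - β/2) :=
        mul_nonneg (sq_nonneg t) (by linarith)
      nlinarith [hkey, hTlow, hb1, happ]
  · intro hβ a b ha hb hab
    have h1 := (part1 a b ha hb hab).2
    have h2 := A_lt_S ha hb hab
    nlinarith [mul_le_mul_of_nonneg_right hβ (sub_nonneg.2 h2.le)]

theorem sharp_stmt_13 :
    (∀ a b : ℝ, 0 < a → 0 < b → a ≠ b →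
        ((4 - Real.pi) / ((Real.sqrt 2 - 1) * Real.pi)) * Smean a b + (1 - ((4 - Real.pi) / ((Real.sqrt 2 - 1) * Real.pi))) * Amean a b < Tmean a b ∧
        Tmean a b < (2 / 3) * Smean a b + (1 - (2 / 3)) * Amean a b) ∧
    (∀ α : ℝ, (∀ a b : ℝ, 0 < a → 0 < b → a ≠ b →
        α * Smean a b + (1 - α) * Amean a b < Tmean a b) ↔ α ≤ ((4 - Real.pi) / ((Real.sqrt 2 - 1) * Real.pi))) ∧
    (∀ β : ℝ, (∀ a b : ℝ, 0 < a → 0 < b → a ≠ b →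
        Tmean a b < β * Smean a b + (1 - β) * Amean a b) ↔ β ≥ (2 / 3)) := by
  have hal : (4 - Real.pi) / ((Real.sqrt 2 - 1) * Real.pi) = al := rfl
  refine ⟨?_, ?_, ?_⟩
  · intro a b ha hb hab
    rw [hal]
    exact part1 a b ha hb hab
  · intro α
    rw [hal]
    exact part2 α
  · exact part3
end
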